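/- Let a > 0, 0 < b < c, 0 ≤ z₁ ≤ 1, 0 ≤ z₂ ≤ 1 and 0 ≤ z₃ < 1. Then |(1−z₂z₃)^a ₂F₁(a,b;c;z₁z₂z₃) − (1−z₃)^a ₂F₁(a,b;c;z₁z₃)| ≤ (1/4) · (1−z₂z₃)^a/(1−z₃)^a. -/

import Mathlib

open Real MeasureTheory

/-- Classical Euler beta function `B(x,y) = ∫₀¹ t^(x-1) (1-t)^(y-1) dt`. -/
noncomputable def eulerBeta (x y : ℝ) : ℝ :=
  ∫ t in (0:ℝ)..1, t ^ (x - 1) * (1 - t) ^ (y - 1)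

/-- `λ_{x,y} = x^x y^y / (x+y)^(x+y)`; the convention `0^0 = 1` is automatic for `rpow`. -/
noncomputable def lam (x y : ℝ) : ℝ := x ^ x * y ^ y / (x + y) ^ (x + y)

/-- Pochhammer symbol `(x)_n = x (x+1) ⋯ (x+n-1)`. -/
noncomputable def poch (x : ℝ) (n : ℕ) : ℝ := ∏ k ∈ Finset.range n, (x + k)

/-- Confluent hypergeometric (Kummer) function `₁F₁(b;c;z)`. -/
noncomputable def oneF1 (b c z : ℝ) : ℝ :=
  ∑' n : ℕ, poch b n / poch c n * z ^ n / (Nat.factorial n : ℝ)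

/-- Gauss hypergeometric function `₂F₁(a,b;c;z)`. -/
noncomputable def twoF1 (a b c z : ℝ) : ℝ :=
  ∑' n : ℕ, poch a n * poch b n / poch c n * z ^ n / (Nat.factorial n : ℝ)

open Filter Topology

section Aux

lemma poch_pos {x : ℝ} (hx : 0 < x) (n : ℕ) : 0 < poch x n :=
  Finset.prod_pos fun k _ => by positivity

lemma poch_succ (x : ℝ) (n : ℕ) : poch x (n + 1) = poch x n * (x + n) :=
  Finset.prod_range_succ _ _

/-- Coefficient of `yⁿ` in `₂F₁(a,b;c;z₁ y)`. -/
noncomputable def hypD (a b c z₁ : ℝ) (n : ℕ) : ℝ :=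
  poch a n * poch b n / poch c n * z₁ ^ n / (Nat.factorial n : ℝ)

/-- Ratio `hypD (n+1) / hypD n`. -/
noncomputable def hypR (a b c z₁ : ℝ) (n : ℕ) : ℝ :=
  (a + n) * (b + n) * z₁ / ((c + n) * ((n : ℝ) + 1))

variable {a b c z₁ : ℝ}

lemma hypD_nonneg (ha : 0 < a) (hb : 0 < b) (hc : 0 < c) (h0 : 0 ≤ z₁) (n : ℕ) :
    0 ≤ hypD a b c z₁ n := by
  have h1 := (poch_pos ha n).le
  have h2 := (poch_pos hb n).le
  have h3 := (poch_pos hc n).le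
  exact div_nonneg (mul_nonneg (div_nonneg (mul_nonneg h1 h2) h3) (pow_nonneg h0 n))
    (Nat.cast_nonneg _)

lemma hypD_zero : hypD a b c z₁ 0 = 1 := by
  simp [hypD, poch]

lemma hypD_succ (hc : 0 < c) (n : ℕ) :
    hypD a b c z₁ (n + 1) = hypD a b c z₁ n * hypR a b c z₁ n := by
  have h1 : poch c n ≠ 0 := (poch_pos hc n).ne'
  have h2 : (c + (n : ℝ)) ≠ 0 := by positivity
  have h3 : ((n : ℝ) + 1) ≠ 0 := by positivity
  have h4 : (Nat.factorial n : ℝ) ≠ 0 := Nat.cast_ne_zero.2 (Nat.factorial_ne_zero n)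
  simp only [hypD, hypR, poch_succ, Nat.factorial_succ, pow_succ, Nat.cast_mul, Nat.cast_add,
    Nat.cast_one]
  field_simp

lemma hypR_nonneg (ha : 0 < a) (hb : 0 < b) (hc : 0 < c) (h0 : 0 ≤ z₁) (n : ℕ) :
    0 ≤ hypR a b c z₁ n := by
  unfold hypR
  positivity

lemma hypD_step (ha : 0 < a) (hb : 0 < b) (hbc : b < c) (h0 : 0 ≤ z₁) (h1 : z₁ ≤ 1) (n : ℕ) :
    hypD a b c z₁ (n + 1) * ((n : ℝ) + 1) ≤ hypD a b c z₁ n * (a + n) := by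
  have hc : 0 < c := hb.trans hbc
  have hdn : 0 ≤ hypD a b c z₁ n := hypD_nonneg ha hb hc h0 n
  have h2 : (0 : ℝ) < c + n := by positivity
  have h3 : (0 : ℝ) < (n : ℝ) + 1 := by positivity
  rw [hypD_succ hc n]
  have hX : hypR a b c z₁ n * ((n : ℝ) + 1) = (a + n) * (b + n) * z₁ / (c + n) := by
    unfold hypR; field_simp
  have hbn : (b + (n : ℝ)) * z₁ ≤ c + n := by nlinarith [Nat.cast_nonneg (α := ℝ) n]
  have hXle : hypR a b c z₁ n * ((n : ℝ) + 1) ≤ a + n := by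
    rw [hX, div_le_iff₀ h2]
    nlinarith [Nat.cast_nonneg (α := ℝ) n]
  calc hypD a b c z₁ n * hypR a b c z₁ n * ((n : ℝ) + 1)
      = hypD a b c z₁ n * (hypR a b c z₁ n * ((n : ℝ) + 1)) := by ring
    _ ≤ hypD a b c z₁ n * (a + n) := mul_le_mul_of_nonneg_left hXle hdn

lemma aux_tendsto (x : ℝ) {y : ℝ} (hy : 0 < y) :
    Tendsto (fun n : ℕ => (x + n) / (y + n)) atTop (𝓝 1) := by
  have h0 : Tendsto (fun n : ℕ => (y + (n : ℝ))) atTop atTop :=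
    tendsto_atTop_add_const_left _ y tendsto_natCast_atTop_atTop
  have h : Tendsto (fun n : ℕ => 1 + (x - y) / (y + n)) atTop (𝓝 (1 + 0)) :=
    tendsto_const_nhds.add (Tendsto.div_atTop tendsto_const_nhds h0)
  rw [add_zero] at h
  refine h.congr fun n => ?_
  have hn : y + (n : ℝ) ≠ 0 := by positivity
  field_simp
  ring

lemma hypR_tendsto (hb : 0 < b) (hc : 0 < c) :
    Tendsto (hypR a b c z₁) atTop (𝓝 z₁) := by
  have h1 := aux_tendsto (y := c) a hc
  have h2 := aux_tendsto (y := 1) b one_pos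
  have h := (h1.mul h2).mul (tendsto_const_nhds (x := z₁))
  rw [one_mul, one_mul] at h
  refine h.congr fun n => ?_
  unfold hypR
  rw [div_mul_div_comm, div_mul_eq_mul_div]
  congr 1
  ring

lemma summable_hypD_mul_pow (ha : 0 < a) (hb : 0 < b) (hbc : b < c) (h0 : 0 ≤ z₁) (h1 : z₁ ≤ 1)
    {y : ℝ} (hy : |y| < 1) : Summable fun n => hypD a b c z₁ n * y ^ n := by
  have hc : 0 < c := hb.trans hbc
  have hr1 : (1 + |y|) / 2 < 1 := by linarith
  have hzy : z₁ * |y| < (1 + |y|) / 2 := by nlinarith [abs_nonneg y]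
  have htend : Tendsto (fun n => hypR a b c z₁ n * |y|) atTop (𝓝 (z₁ * |y|)) :=
    (hypR_tendsto hb hc).mul_const _
  have hev : ∀ᶠ n in atTop, hypR a b c z₁ n * |y| < (1 + |y|) / 2 :=
    htend.eventually_lt_const hzy
  apply summable_of_ratio_norm_eventually_le hr1
  filter_upwards [hev] with n hn
  have hdn : 0 ≤ hypD a b c z₁ n := hypD_nonneg ha hb hc h0 n
  have hrn : 0 ≤ hypR a b c z₁ n := hypR_nonneg ha hb hc h0 n
  have habs : ‖hypD a b c z₁ (n + 1) * y ^ (n + 1)‖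
      = (hypD a b c z₁ n * |y| ^ n) * (hypR a b c z₁ n * |y|) := by
    rw [hypD_succ hc n, Real.norm_eq_abs, abs_mul, abs_mul, abs_pow,
      abs_of_nonneg hdn, abs_of_nonneg hrn, pow_succ]
    ring
  rw [habs, Real.norm_eq_abs, abs_mul, abs_pow, abs_of_nonneg hdn, mul_comm ((1 + |y|) / 2)]
  exact mul_le_mul_of_nonneg_left hn.le (by positivity)

lemma summable_hypD_deriv (ha : 0 < a) (hb : 0 < b) (hbc : b < c) (h0 : 0 ≤ z₁) (h1 : z₁ ≤ 1)
    {r : ℝ} (hr0 : 0 ≤ r) (hr1 : r < 1) :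
    Summable fun n : ℕ => (n : ℝ) * hypD a b c z₁ n * r ^ (n - 1) := by
  have hc : 0 < c := hb.trans hbc
  rw [← summable_nat_add_iff 1]
  simp only [Nat.add_sub_cancel, Nat.cast_add, Nat.cast_one]
  have hr1' : (1 + r) / 2 < 1 := by linarith
  have htend : Tendsto (fun n : ℕ => (((n : ℝ) + 2) / ((n : ℝ) + 1)) * hypR a b c z₁ (n + 1) * r)
      atTop (𝓝 (1 * z₁ * r)) := by
    have ht1 : Tendsto (fun n : ℕ => ((n : ℝ) + 2) / ((n : ℝ) + 1)) atTop (𝓝 1) := by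
      refine (aux_tendsto (y := 1) 2 one_pos).congr fun n => ?_
      rw [add_comm (2:ℝ), add_comm (1:ℝ)]
    have ht2 : Tendsto (fun n : ℕ => hypR a b c z₁ (n + 1)) atTop (𝓝 z₁) :=
      (hypR_tendsto hb hc).comp (tendsto_add_atTop_nat 1)
    exact (ht1.mul ht2).mul_const r
  have hlt : 1 * z₁ * r < (1 + r) / 2 := by nlinarith
  apply summable_of_ratio_norm_eventually_le hr1'
  filter_upwards [htend.eventually_lt_const hlt] with n hn
  have hdn : 0 ≤ hypD a b c z₁ (n + 1) := hypD_nonneg ha hb hc h0 (n + 1)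
  have hrn : 0 ≤ hypR a b c z₁ (n + 1) := hypR_nonneg ha hb hc h0 (n + 1)
  have hn1 : ((n : ℝ) + 1) ≠ 0 := by positivity
  have heq : ((n : ℝ) + 1 + 1) * hypD a b c z₁ (n + 1 + 1) * r ^ (n + 1)
      = ((((n : ℝ) + 2) / ((n : ℝ) + 1)) * hypR a b c z₁ (n + 1) * r)
        * (((n : ℝ) + 1) * hypD a b c z₁ (n + 1) * r ^ n) := by
    rw [hypD_succ hc (n + 1), pow_succ]
    field_simp
    ring
  push_cast
  rw [Real.norm_eq_abs, Real.norm_eq_abs, heq, abs_mul]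
  have hXn : 0 ≤ |((n : ℝ) + 1) * hypD a b c z₁ (n + 1) * r ^ n| := abs_nonneg _
  have h2 : |(((n : ℝ) + 2) / ((n : ℝ) + 1)) * hypR a b c z₁ (n + 1) * r| ≤ (1 + r) / 2 := by
    rw [abs_of_nonneg (by positivity)]
    exact hn.le
  exact mul_le_mul_of_nonneg_right h2 hXn

set_option maxHeartbeats 1000000 in
lemma hasDerivAt_hypF (ha : 0 < a) (hb : 0 < b) (hbc : b < c) (h0 : 0 ≤ z₁) (h1 : z₁ ≤ 1)
    {y : ℝ} (hy : |y| < 1) :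
    HasDerivAt (fun x => ∑' n, hypD a b c z₁ n * x ^ n)
      (∑' n, hypD a b c z₁ n * ((n : ℝ) * y ^ (n - 1))) y := by
  have hc : 0 < c := hb.trans hbc
  set r : ℝ := (1 + |y|) / 2 with hrdef
  have hr1 : r < 1 := by rw [hrdef]; linarith
  have hr0 : 0 < r := by rw [hrdef]; positivity
  have hyr : y ∈ Set.Ioo (-r) r := by
    constructor
    · have := neg_abs_le y; rw [hrdef]; nlinarith [abs_nonneg y]
    · have := le_abs_self y; rw [hrdef]; nlinarith [abs_nonneg y]
  have hu : Summable (fun n : ℕ => hypD a b c z₁ n * ((n : ℝ) * r ^ (n - 1))) :=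
    (summable_hypD_deriv ha hb hbc h0 h1 hr0.le hr1).congr fun n => by ring
  have hg0 : Summable (fun n : ℕ => hypD a b c z₁ n * (0:ℝ) ^ n) :=
    summable_hypD_mul_pow ha hb hbc h0 h1 (by simp : |(0:ℝ)| < 1)
  refine hasDerivAt_tsum_of_isPreconnected
    (g := fun (n : ℕ) (x : ℝ) => hypD a b c z₁ n * x ^ n)
    (g' := fun (n : ℕ) (x : ℝ) => hypD a b c z₁ n * ((n : ℝ) * x ^ (n - 1))) hu isOpen_Ioo
    (convex_Ioo _ _).isPreconnected ?_ ?_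
    (show (0 : ℝ) ∈ Set.Ioo (-r) r from ⟨by linarith, hr0⟩) hg0 hyr
  · intro n x hx
    exact (hasDerivAt_pow n x).const_mul _
  · intro n x hx
    have hdn : 0 ≤ hypD a b c z₁ n := hypD_nonneg ha hb hc h0 n
    have hxr : |x| ≤ r := (abs_lt.2 ⟨hx.1, hx.2⟩).le
    rw [Real.norm_eq_abs, abs_mul, abs_mul, abs_pow, abs_of_nonneg hdn, Nat.abs_cast]
    gcongr

lemma hyp_deriv_ineq (ha : 0 < a) (hb : 0 < b) (hbc : b < c) (h0 : 0 ≤ z₁) (h1 : z₁ ≤ 1)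
    {y : ℝ} (hy0 : 0 < y) (hy1 : y < 1) :
    (1 - y) * (∑' n, hypD a b c z₁ n * ((n : ℝ) * y ^ (n - 1)))
      ≤ a * ∑' n, hypD a b c z₁ n * y ^ n := by
  have hc : 0 < c := hb.trans hbc
  set D := hypD a b c z₁ with hD
  have hyabs : |y| < 1 := by rw [abs_of_pos hy0]; exact hy1
  have hS : Summable (fun n => D n * y ^ n) := summable_hypD_mul_pow ha hb hbc h0 h1 hyabs
  have hSu : Summable (fun n : ℕ => (n : ℝ) * D n * y ^ (n - 1)) :=
    summable_hypD_deriv ha hb hbc h0 h1 hy0.le hy1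
  have hT : Summable (fun n => D n * ((n : ℝ) * y ^ (n - 1))) := hSu.congr fun n => by ring
  have hTn : Summable (fun n : ℕ => (n : ℝ) * D n * y ^ n) := by
    refine (hSu.mul_right y).congr fun n => ?_
    cases n with
    | zero => simp
    | succ m => simp only [Nat.add_sub_cancel, pow_succ]; ring
  have hshift : Summable (fun m => D (m + 1) * (((m : ℝ) + 1) * y ^ m)) := by
    have h := (summable_nat_add_iff 1).2 hT
    refine h.congr fun m => ?_
    simp [Nat.add_sub_cancel]
  have hP : Summable (fun m : ℕ => (a + (m : ℝ)) * D m * y ^ m) :=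
    ((hS.mul_left a).add hTn).congr fun m => by ring
  have hTeq : (∑' n, D n * ((n : ℝ) * y ^ (n - 1)))
      = ∑' m, D (m + 1) * (((m : ℝ) + 1) * y ^ m) := by
    rw [Summable.tsum_eq_zero_add hT]
    simp [Nat.add_sub_cancel]
  have hle : (∑' m, D (m + 1) * (((m : ℝ) + 1) * y ^ m)) ≤ ∑' m : ℕ, (a + (m : ℝ)) * D m * y ^ m := by
    refine Summable.tsum_le_tsum (fun m => ?_) hshift hP
    have h1' := hypD_step ha hb hbc h0 h1 m
    have hym : (0 : ℝ) ≤ y ^ m := by positivity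
    calc D (m + 1) * (((m : ℝ) + 1) * y ^ m)
        = (D (m + 1) * ((m : ℝ) + 1)) * y ^ m := by ring
      _ ≤ (D m * (a + m)) * y ^ m := mul_le_mul_of_nonneg_right h1' hym
      _ = (a + (m : ℝ)) * D m * y ^ m := by ring
  have hPsplit : (∑' m : ℕ, (a + (m : ℝ)) * D m * y ^ m)
      = a * (∑' n, D n * y ^ n) + ∑' n : ℕ, (n : ℝ) * D n * y ^ n := by
    rw [← tsum_mul_left, ← Summable.tsum_add (hS.mul_left a) hTn]
    exact tsum_congr fun m => by ring
  have hyT : y * (∑' n, D n * ((n : ℝ) * y ^ (n - 1))) = ∑' n : ℕ, (n : ℝ) * D n * y ^ n := by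
    rw [← tsum_mul_left]
    refine tsum_congr fun n => ?_
    cases n with
    | zero => simp
    | succ m => simp only [Nat.add_sub_cancel, pow_succ]; ring
  have hmain : (∑' n, D n * ((n : ℝ) * y ^ (n - 1)))
      ≤ a * (∑' n, D n * y ^ n) + y * (∑' n, D n * ((n : ℝ) * y ^ (n - 1))) := by
    rw [hyT, hTeq, ← hPsplit]; exact hle
  nlinarith [hmain]

lemma hypF_antitone (ha : 0 < a) (hb : 0 < b) (hbc : b < c) (h0 : 0 ≤ z₁) (h1 : z₁ ≤ 1) :
    AntitoneOn (fun y => (1 - y) ^ a * ∑' n, hypD a b c z₁ n * y ^ n) (Set.Ico (0:ℝ) 1) := by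
  set D := hypD a b c z₁ with hD
  have hderiv : ∀ y ∈ Set.Ioo (-1 : ℝ) 1,
      HasDerivAt (fun x => (1 - x) ^ a * ∑' n, D n * x ^ n)
        ((a * (1 - y) ^ (a - 1) * (-1)) * (∑' n, D n * y ^ n)
          + (1 - y) ^ a * (∑' n, D n * ((n : ℝ) * y ^ (n - 1)))) y := by
    intro y hy
    have h1y : (0 : ℝ) < 1 - y := by linarith [hy.2]
    have habs : |y| < 1 := abs_lt.2 ⟨hy.1, hy.2⟩
    have hF := hasDerivAt_hypF ha hb hbc h0 h1 habs
    have hg : HasDerivAt (fun x : ℝ => (1 - x) ^ a) (a * (1 - y) ^ (a - 1) * (-1)) y := by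
      have hin : HasDerivAt (fun x : ℝ => 1 - x) (-1) y := (hasDerivAt_id y).const_sub 1
      have hout := Real.hasDerivAt_rpow_const (x := 1 - y) (p := a) (Or.inl h1y.ne')
      exact hout.comp y hin
    exact hg.mul hF
  apply antitoneOn_of_deriv_nonpos (convex_Ico 0 1)
  · intro y hy
    exact (hderiv y ⟨by linarith [hy.1], hy.2⟩).continuousAt.continuousWithinAt
  · rw [interior_Ico]
    intro y hy
    exact (hderiv y ⟨by linarith [hy.1], hy.2⟩).differentiableAt.differentiableWithinAt
  · rw [interior_Ico]
    intro y hy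
    rw [(hderiv y ⟨by linarith [hy.1], hy.2⟩).deriv]
    have h1y : (0 : ℝ) < 1 - y := by linarith [hy.2]
    have hkey := hyp_deriv_ineq ha hb hbc h0 h1 hy.1 hy.2
    have hrw : (1 - y) ^ a = (1 - y) ^ (a - 1) * (1 - y) := by
      have h := Real.rpow_add_one h1y.ne' (a - 1)
      rw [sub_add_cancel] at h
      exact h
    have hpow : 0 < (1 - y) ^ (a - 1) := rpow_pos_of_pos h1y _
    have h2 : (1 - y) * (∑' n, D n * ((n : ℝ) * y ^ (n - 1))) - a * (∑' n, D n * y ^ n) ≤ 0 :=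
      by linarith [hkey]
    calc (a * (1 - y) ^ (a - 1) * (-1)) * (∑' n, D n * y ^ n)
          + (1 - y) ^ a * (∑' n, D n * ((n : ℝ) * y ^ (n - 1)))
        = (1 - y) ^ (a - 1) * ((1 - y) * (∑' n, D n * ((n : ℝ) * y ^ (n - 1)))
            - a * (∑' n, D n * y ^ n)) := by rw [hrw]; ring
      _ ≤ 0 := mul_nonpos_of_nonneg_of_nonpos hpow.le h2

lemma twoF1_eq_tsum_hypD (w : ℝ) (z₁ : ℝ) (a b c : ℝ) :
    twoF1 a b c (z₁ * w) = ∑' n, hypD a b c z₁ n * w ^ n := by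
  refine tsum_congr fun n => ?_
  simp only [hypD, mul_pow]
  ring

end Aux

theorem stmt19 (a b c z₁ z₂ z₃ : ℝ) (ha : 0 < a) (hb : 0 < b) (hbc : b < c)
    (hz₁ : z₁ ∈ Set.Icc (0:ℝ) 1) (hz₂ : z₂ ∈ Set.Icc (0:ℝ) 1)
    (hz₃ : z₃ ∈ Set.Ico (0:ℝ) 1) :
    |(1 - z₂ * z₃) ^ a * twoF1 a b c (z₁ * z₂ * z₃) -
        (1 - z₃) ^ a * twoF1 a b c (z₁ * z₃)| ≤
      1 / 4 * ((1 - z₂ * z₃) ^ a / (1 - z₃) ^ a) := by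
  obtain ⟨hz₁0, hz₁1⟩ := hz₁
  obtain ⟨hz₂0, hz₂1⟩ := hz₂
  obtain ⟨hz₃0, hz₃1⟩ := hz₃
  have hc : 0 < c := hb.trans hbc
  set x : ℝ := z₂ * z₃ with hxdef
  set y : ℝ := z₃ with hydef
  have hx0 : 0 ≤ x := mul_nonneg hz₂0 hz₃0
  have hxy : x ≤ y := by rw [hxdef, hydef]; nlinarith
  have hy1 : y < 1 := hz₃1
  have hx1 : x < 1 := lt_of_le_of_lt hxy hy1
  -- series rewriting
  have hrwx : twoF1 a b c (z₁ * z₂ * z₃) = ∑' n, hypD a b c z₁ n * x ^ n := by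
    rw [mul_assoc]; exact twoF1_eq_tsum_hypD x z₁ a b c
  have hrwy : twoF1 a b c (z₁ * z₃) = ∑' n, hypD a b c z₁ n * y ^ n :=
    twoF1_eq_tsum_hypD y z₁ a b c
  set D := hypD a b c z₁ with hD
  set s : ℝ := (1 - x) ^ a with hsdef
  set t : ℝ := (1 - y) ^ a with htdef
  set A : ℝ := s * ∑' n, D n * x ^ n with hAdef
  set B : ℝ := t * ∑' n, D n * y ^ n with hBdef
  have hs : 0 < s := rpow_pos_of_pos (by linarith) a
  have ht : 0 < t := rpow_pos_of_pos (by linarith) a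
  have hts : t ≤ s := by
    apply Real.rpow_le_rpow (by linarith) (by linarith) ha.le
  -- antitonicity facts
  have key := hypF_antitone ha hb hbc hz₁0 hz₁1 (a := a) (b := b) (c := c) (z₁ := z₁)
  have hxI : x ∈ Set.Ico (0:ℝ) 1 := ⟨hx0, hx1⟩
  have hyI : y ∈ Set.Ico (0:ℝ) 1 := ⟨hz₃0, hz₃1⟩
  have h0I : (0:ℝ) ∈ Set.Ico (0:ℝ) 1 := ⟨le_refl 0, one_pos⟩
  have hBA : B ≤ A := key hxI hyI hxy
  have hA1 : A ≤ 1 := by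
    have h : A ≤ (1 - (0:ℝ)) ^ a * ∑' n, D n * (0:ℝ) ^ n := key h0I hxI hx0
    have hf0 : (1 - (0:ℝ)) ^ a * ∑' n, D n * (0:ℝ) ^ n = 1 := by
      have : (∑' n, D n * (0:ℝ) ^ n) = 1 := by
        rw [tsum_eq_single 0 (fun n hn => by
          rw [zero_pow hn, mul_zero])]
        simp [hD, hypD_zero]
      rw [this, sub_zero, Real.one_rpow, mul_one]
    rw [hf0] at h
    exact h
  -- summabilities
  have hSx : Summable (fun n => D n * x ^ n) :=
    summable_hypD_mul_pow ha hb hbc hz₁0 hz₁1 (by rw [abs_of_nonneg hx0]; exact hx1)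
  have hSy : Summable (fun n => D n * y ^ n) :=
    summable_hypD_mul_pow ha hb hbc hz₁0 hz₁1 (by rw [abs_of_nonneg hz₃0]; exact hz₃1)
  -- monotonicity of the series
  have hmono : (∑' n, D n * x ^ n) ≤ ∑' n, D n * y ^ n := by
    refine Summable.tsum_le_tsum (fun n => ?_) hSx hSy
    exact mul_le_mul_of_nonneg_left (pow_le_pow_left₀ hx0 hxy n)
      (hypD_nonneg ha hb hc hz₁0 n)
  have htA : t * A ≤ s * B := by
    have h := mul_le_mul_of_nonneg_left hmono (mul_pos ht hs).le
    rw [hAdef, hBdef]; nlinarith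
  -- F(y-series) ≥ 1
  have hF2 : 1 ≤ ∑' n, D n * y ^ n := by
    have h := Summable.le_tsum hSy 0 (fun j _ => mul_nonneg (hypD_nonneg ha hb hc hz₁0 j)
      (pow_nonneg hz₃0 j))
    simpa [hD, hypD_zero] using h
  have hBt : t ≤ B := by
    rw [hBdef]; nlinarith
  have hB0 : 0 ≤ B := le_trans ht.le hBt
  -- final arithmetic
  rw [hrwx, hrwy]
  rw [show (1 - z₂ * z₃) ^ a * (∑' n, D n * x ^ n) - (1 - z₃) ^ a * (∑' n, D n * y ^ n)
      = A - B from rfl]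
  rw [abs_of_nonneg (by linarith : (0:ℝ) ≤ A - B)]
  have h4 : 4 * t * (A - B) ≤ s := by
    rcases le_or_gt (s * B) t with hcase | hcase
    · nlinarith [sq_nonneg (s - 2 * t), mul_nonneg (sub_nonneg.2 hts) hB0,
        mul_nonneg (sub_nonneg.2 hts) (sub_nonneg.2 hcase), mul_pos hs ht]
    · nlinarith [sq_nonneg (s - 2 * t), mul_pos hs ht, mul_nonneg (sub_nonneg.2 hA1) (mul_pos hs ht).le,
        mul_nonneg (sub_nonneg.2 hcase.le) ht.le]
  have hfinal : A - B ≤ s / (4 * t) := by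
    rw [le_div_iff₀ (by linarith : (0:ℝ) < 4 * t)]
    linarith
  calc A - B ≤ s / (4 * t) := hfinal
    _ = 1 / 4 * (s / t) := by rw [div_mul_div_comm, one_mul]
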